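/- There exists a signal f₀ ∈ PW^1_π such that limsup_{N→∞} sup_{t∈ℝ} |(S_N f₀)(t)| = ∞; in particular, since every function in PW^1_π is bounded on ℝ, also limsup_{N→∞} sup_{t∈ℝ} |f₀(t) − (S_N f₀)(t)| = ∞. -/

import Mathlib

open MeasureTheory Filter Topology Real Complex
open scoped ENNReal NNReal

noncomputable section

/-- The normalized sinc function `sin(πx)/(πx)` (with value `1` at `x = 0`). -/
def sincπ (x : ℝ) : ℝ := if x = 0 then 1 else Real.sin (π * x) / (π * x)

/-- `f` belongs to the Paley–Wiener space `PW^p_σ`: it is the inverse Fourier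
transform of some `g ∈ L^p([-σ, σ])`. -/
def IsPW (p : ℝ≥0∞) (σ : ℝ) (f : ℂ → ℂ) : Prop :=
  ∃ g : ℝ → ℂ, MemLp g p (volume.restrict (Set.Icc (-σ) σ)) ∧
    ∀ z : ℂ, f z = ((1 / (2 * π) : ℝ) : ℂ) *
      ∫ ω in Set.Icc (-σ) σ, g ω * Complex.exp (Complex.I * (ω : ℂ) * z)

/-- The symmetric partial sum of degree `N` of the Shannon sampling series. -/
def shannonSum (f : ℂ → ℂ) (N : ℕ) (t : ℝ) : ℂ :=
  ∑ n ∈ Finset.Icc (-(N : ℤ)) (N : ℤ), f (n : ℂ) * ((sincπ (t - n) : ℝ) : ℂ)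

lemma ofReal_norm_eq_coe_nnnorm {E : Type*} [SeminormedAddGroup E] (a : E) :
    ENNReal.ofReal ‖a‖ = (‖a‖₊ : ℝ≥0∞) := ofReal_norm a


def Efun (x : ℝ) (n : ℤ) : ℂ := Complex.exp (Complex.I * n * x)

lemma Emul (x : ℝ) (a b : ℤ) : Efun x a * Efun x b = Efun x (a+b) := by
  rw [Efun, Efun, Efun, ← Complex.exp_add]
  congr 1
  push_cast
  ring

lemma Econj (x : ℝ) (a : ℤ) : (starRingEnd ℂ) (Efun x a) = Efun x (-a) := by
  rw [Efun, Efun, ← Complex.exp_conj]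
  congr 1
  simp [Complex.conj_I]

lemma Ezero (x : ℝ) : Efun x 0 = 1 := by simp [Efun]

def Qsum (A : ℕ) (x : ℝ) : ℂ := ∑ j ∈ Finset.range (A+1), Efun x j

lemma fejer_key (A : ℕ) (x : ℝ) :
    Qsum A x * (starRingEnd ℂ) (Qsum A x)
      = ∑ n ∈ Finset.Icc (-(A:ℤ)) A, (((A:ℤ) + 1 - |n| : ℤ) : ℂ) * Efun x n := by
  induction A with
  | zero => simp [Qsum, Ezero]
  | succ A ih =>
    have hQ : Qsum (A+1) x = Qsum A x + Efun x ((A:ℤ)+1) := by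
      rw [Qsum, Finset.sum_range_succ, Qsum]
      norm_cast
    have h3 : Efun x ((A:ℤ)+1) * (starRingEnd ℂ) (Efun x ((A:ℤ)+1)) = 1 := by
      rw [Econj, Emul, add_neg_cancel, Ezero]
    have h1 : Qsum A x * (starRingEnd ℂ) (Efun x ((A:ℤ)+1))
        = ∑ n ∈ Finset.Icc (-(A:ℤ)-1) (-1), Efun x n := by
      rw [Econj, Qsum, Finset.sum_mul]
      refine Finset.sum_nbij' (fun j => (j:ℤ) - ((A:ℤ)+1)) (fun n => (n + ((A:ℤ)+1)).toNat) ?_ ?_ ?_ ?_ ?_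
      · intro j hj; simp only [Finset.mem_range] at hj; simp only [Finset.mem_Icc]; omega
      · intro n hn; simp only [Finset.mem_Icc] at hn; simp only [Finset.mem_range]; omega
      · intro j hj; simp only [Finset.mem_range] at hj; omega
      · intro n hn; simp only [Finset.mem_Icc] at hn; omega
      · intro j hj; rw [Emul]; ring_nf
    have h2 : Efun x ((A:ℤ)+1) * (starRingEnd ℂ) (Qsum A x)
        = ∑ n ∈ Finset.Icc (1:ℤ) ((A:ℤ)+1), Efun x n := by
      rw [Qsum, map_sum, Finset.mul_sum]
      refine Finset.sum_nbij' (fun j => ((A:ℤ)+1) - (j:ℤ)) (fun n => (((A:ℤ)+1) - n).toNat) ?_ ?_ ?_ ?_ ?_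
      · intro j hj; simp only [Finset.mem_range] at hj; simp only [Finset.mem_Icc]; omega
      · intro n hn; simp only [Finset.mem_Icc] at hn; simp only [Finset.mem_range]; omega
      · intro j hj; simp only [Finset.mem_range] at hj; omega
      · intro n hn; simp only [Finset.mem_Icc] at hn; omega
      · intro j hj; rw [Econj, Emul]; ring_nf
    rw [hQ, map_add, mul_add, add_mul, add_mul, ih, h1, h2, h3]
    have coeffsplit : ∑ n ∈ Finset.Icc (-((A+1:ℕ):ℤ)) ((A+1:ℕ):ℤ), ((((A+1:ℕ):ℤ) + 1 - |n| : ℤ) : ℂ) * Efun x n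
        = (∑ n ∈ Finset.Icc (-((A+1:ℕ):ℤ)) ((A+1:ℕ):ℤ), (((A:ℤ) + 1 - |n| : ℤ) : ℂ) * Efun x n)
          + ∑ n ∈ Finset.Icc (-((A+1:ℕ):ℤ)) ((A+1:ℕ):ℤ), Efun x n := by
      rw [← Finset.sum_add_distrib]
      refine Finset.sum_congr rfl fun n hn => ?_
      push_cast
      ring
    have hsub : ∑ n ∈ Finset.Icc (-((A+1:ℕ):ℤ)) ((A+1:ℕ):ℤ), (((A:ℤ) + 1 - |n| : ℤ) : ℂ) * Efun x n
        = ∑ n ∈ Finset.Icc (-(A:ℤ)) ((A:ℤ)), (((A:ℤ) + 1 - |n| : ℤ) : ℂ) * Efun x n := by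
      symm
      refine Finset.sum_subset ?_ ?_
      · intro n hn; simp only [Finset.mem_Icc] at *; push_cast at *; omega
      · intro n hn hn'
        simp only [Finset.mem_Icc] at hn hn'
        push_cast at hn
        have : |n| = (A:ℤ) + 1 := by rcases abs_cases n with ⟨h,_⟩|⟨h,_⟩ <;> omega
        rw [this]
        simp
    have hsplit : ∑ n ∈ Finset.Icc (-((A+1:ℕ):ℤ)) ((A+1:ℕ):ℤ), Efun x n
        = (∑ n ∈ Finset.Icc (-(A:ℤ)-1) (-1), Efun x n)
          + (Efun x 0 + ∑ n ∈ Finset.Icc (1:ℤ) ((A:ℤ)+1), Efun x n) := by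
      have u1 : Finset.Icc (-((A+1:ℕ):ℤ)) ((A+1:ℕ):ℤ)
          = Finset.Icc (-(A:ℤ)-1) (-1) ∪ Finset.Icc (0:ℤ) ((A:ℤ)+1) := by
        ext n; simp only [Finset.mem_union, Finset.mem_Icc]; push_cast; omega
      have u2 : Finset.Icc (0:ℤ) ((A:ℤ)+1) = insert (0:ℤ) (Finset.Icc (1:ℤ) ((A:ℤ)+1)) := by
        ext n; simp only [Finset.mem_insert, Finset.mem_Icc]; omega
      rw [u1, Finset.sum_union, u2, Finset.sum_insert]
      · simp
      · rw [Finset.disjoint_left]; intro n hn hn'; simp only [Finset.mem_Icc] at *; omega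
    rw [coeffsplit, hsub, hsplit, Ezero]
    ring

def fc (A : ℕ) (n : ℤ) : ℝ := ((max 0 ((A:ℤ)+1-|n|) : ℤ) : ℝ)/((A:ℝ)+1)

def Fej (A : ℕ) (x : ℝ) : ℝ := Complex.normSq (Qsum A x) / ((A:ℝ)+1)

lemma Fej_nonneg (A : ℕ) (x : ℝ) : 0 ≤ Fej A x := by
  apply div_nonneg (Complex.normSq_nonneg _)
  positivity

lemma FejC (A : ℕ) (x : ℝ) :
    ((Fej A x : ℝ) : ℂ) = ∑ n ∈ Finset.Icc (-(A:ℤ)) A, (fc A n : ℂ) * Efun x n := by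
  have h1 : ((Complex.normSq (Qsum A x) : ℝ) : ℂ)
      = ∑ n ∈ Finset.Icc (-(A:ℤ)) A, (((A:ℤ) + 1 - |n| : ℤ) : ℂ) * Efun x n := by
    rw [← Complex.mul_conj, fejer_key]
  have hA : ((A:ℝ)+1) ≠ 0 := by positivity
  rw [Fej]
  push_cast [h1]
  rw [Finset.sum_div]
  refine Finset.sum_congr rfl fun n hn => ?_
  simp only [Finset.mem_Icc] at hn
  have hmax : max 0 ((A:ℤ)+1-|n|) = (A:ℤ)+1-|n| := by
    rcases abs_cases n with ⟨h,_⟩|⟨h,_⟩ <;> omega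
  rw [fc, hmax]
  have habs : ((|n| : ℤ) : ℂ) = ((|(n:ℝ)| : ℝ) : ℂ) := by norm_cast
  rw [habs]
  push_cast
  ring

lemma exp_I_int_pi (k : ℤ) : Complex.exp (Complex.I * k * π) = (-1 : ℂ) ^ k := by
  have : Complex.I * k * π = k * (π * Complex.I) := by ring
  rw [this, Complex.exp_int_mul, Complex.exp_pi_mul_I]

lemma neg_one_zpow_neg (k : ℤ) : ((-1 : ℂ)) ^ (-k) = (-1 : ℂ) ^ k := by
  rw [zpow_neg]
  rcases Int.even_or_odd k with h | h
  · rw [h.neg_one_zpow]; norm_num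
  · rw [Odd.neg_one_zpow h]; norm_num

lemma orth (k : ℤ) :
    ∫ ω in Set.Icc (-π) π, Efun ω k = if k = 0 then ((2*π : ℝ) : ℂ) else 0 := by
  rw [MeasureTheory.integral_Icc_eq_integral_Ioc,
    ← intervalIntegral.integral_of_le (by linarith [Real.pi_pos] : -π ≤ π)]
  rcases eq_or_ne k 0 with hk | hk
  · subst hk
    simp only [Efun, Int.cast_zero, mul_zero, zero_mul, Complex.exp_zero,
      intervalIntegral.integral_const, if_true]
    push_cast
    simp [Complex.real_smul]
    ring
  · have hc : (Complex.I * k : ℂ) ≠ 0 := by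
      simp [Complex.I_ne_zero, Complex.ext_iff, hk]
    have : ∀ ω : ℝ, Efun ω k = Complex.exp ((Complex.I * k) * ω) := by
      intro ω; rw [Efun]
    simp_rw [this]
    rw [integral_exp_mul_complex hc]
    have h1 : (Complex.I * k) * (π : ℂ) = Complex.I * k * π := by ring
    have h2 : (Complex.I * k) * ((-π : ℝ) : ℂ) = Complex.I * ((-k : ℤ) : ℂ) * π := by push_cast; ring
    rw [h1, h2, exp_I_int_pi, exp_I_int_pi, neg_one_zpow_neg, sub_self, zero_div, if_neg hk]

lemma continuous_Efun (k : ℤ) : Continuous fun ω : ℝ => Efun ω k := by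
  unfold Efun
  exact Complex.continuous_exp.comp (by fun_prop)

lemma Eshift (ω : ℝ) (m : ℤ) : Efun (ω - π) m = (-1:ℂ)^m * Efun ω m := by
  have : Efun (ω - π) m = Efun ω m * Complex.exp (Complex.I * ((-m : ℤ) : ℂ) * π) := by
    rw [Efun, Efun, ← Complex.exp_add]
    congr 1
    push_cast
    ring
  rw [this, exp_I_int_pi, neg_one_zpow_neg]
  ring

lemma fc_neg (A : ℕ) (n : ℤ) : fc A (-n) = fc A n := by rw [fc, fc, abs_neg]

lemma fc_zero_of (A : ℕ) (n : ℤ) (h : (A:ℤ) < |n|) : fc A n = 0 := by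
  rw [fc]
  have : max 0 ((A:ℤ)+1-|n|) = 0 := by omega
  rw [this]
  simp

lemma Fint (A : ℕ) (n : ℤ) :
    ∫ ω in Set.Icc (-π) π, ((Fej A (ω - π) : ℝ) : ℂ) * Efun ω n
      = ((2*π : ℝ) : ℂ) * (-1:ℂ)^n * (fc A n : ℂ) := by
  have key : ∀ ω : ℝ, ((Fej A (ω - π) : ℝ) : ℂ) * Efun ω n
      = ∑ m ∈ Finset.Icc (-(A:ℤ)) A, ((fc A m : ℂ) * (-1)^m) * Efun ω (m+n) := by
    intro ω
    rw [FejC, Finset.sum_mul]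
    refine Finset.sum_congr rfl fun m hm => ?_
    rw [Eshift, show (fc A m : ℂ) * ((-1:ℂ)^m * Efun ω m) * Efun ω n
      = ((fc A m : ℂ) * (-1)^m) * (Efun ω m * Efun ω n) from by ring, Emul]
  simp_rw [key]
  rw [MeasureTheory.integral_finset_sum]
  · simp_rw [MeasureTheory.integral_const_mul, orth]
    rcases le_or_gt |n| (A:ℤ) with hn | hn
    · rw [Finset.sum_eq_single (-n)]
      · simp only [neg_add_cancel, if_true, reduceIte]
        rw [fc_neg, neg_one_zpow_neg]
        ring
      · intro m hm hmne
        rw [if_neg (by omega), mul_zero]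
      · intro h
        exfalso
        apply h
        simp only [Finset.mem_Icc]
        rcases abs_cases n with ⟨h,_⟩|⟨h,_⟩ <;> omega
    · rw [fc_zero_of A n hn]
      rw [Finset.sum_eq_zero]
      · simp
      · intro m hm
        simp only [Finset.mem_Icc] at hm
        rw [if_neg (by rcases abs_cases n with ⟨h,_⟩|⟨h,_⟩ <;> omega), mul_zero]
  · intro m hm
    exact (Continuous.mul continuous_const (continuous_Efun (m+n))).integrableOn_Icc

lemma continuous_Fej (A : ℕ) : Continuous (Fej A) := by
  have h : Continuous fun x => Qsum A x := by
    unfold Qsum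
    exact continuous_finset_sum _ fun j _ => continuous_Efun (j:ℤ)
  have h2 : Continuous fun x => Complex.normSq (Qsum A x) := Complex.continuous_normSq.comp h
  unfold Fej
  exact h2.div_const _

lemma continuous_FejShift (A : ℕ) : Continuous fun ω : ℝ => Fej A (ω - π) :=
  (continuous_Fej A).comp (continuous_sub_right π)

def gk (m : ℕ) (ω : ℝ) : ℂ :=
  2 * ((Fej (2*m+1) (ω - π) : ℝ) : ℂ) - ((Fej m (ω - π) : ℝ) : ℂ)

def vc (m : ℕ) (n : ℤ) : ℝ := 2 * fc (2*m+1) n - fc m n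

lemma continuous_gk (m : ℕ) : Continuous (gk m) := by
  unfold gk
  exact (continuous_const.mul (Complex.continuous_ofReal.comp (continuous_FejShift _))).sub
    (Complex.continuous_ofReal.comp (continuous_FejShift _))

lemma vc_eq (m : ℕ) (n : ℤ) :
    vc m n = (((max 0 ((2*(m:ℤ)+2)-|n|) - max 0 (((m:ℤ)+1)-|n|)) : ℤ) : ℝ)/((m:ℝ)+1) := by
  rw [vc, fc, fc]
  have hm : ((m:ℝ)+1) ≠ 0 := by positivity
  have h2m : ((2*m+1:ℕ):ℝ)+1 ≠ 0 := by positivity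
  have hcast : ((2*m+1:ℕ):ℝ) + 1 = 2*((m:ℝ)+1) := by push_cast; ring
  have hmax : ((2*m+1:ℕ):ℤ)+1 = 2*(m:ℤ)+2 := by push_cast; ring
  rw [hcast, hmax]
  push_cast
  field_simp

lemma vc_nonneg (m : ℕ) (n : ℤ) : 0 ≤ vc m n := by
  rw [vc_eq]
  apply div_nonneg _ (by positivity)
  have : (0:ℤ) ≤ max 0 ((2*(m:ℤ)+2)-|n|) - max 0 (((m:ℤ)+1)-|n|) := by omega
  exact_mod_cast this

lemma vc_le_one (m : ℕ) (n : ℤ) : vc m n ≤ 1 := by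
  rw [vc_eq]
  rw [div_le_one (by positivity)]
  have : (max 0 ((2*(m:ℤ)+2)-|n|) - max 0 (((m:ℤ)+1)-|n|)) ≤ (m:ℤ)+1 := by omega
  calc ((max 0 ((2*(m:ℤ)+2)-|n|) - max 0 (((m:ℤ)+1)-|n|) : ℤ) : ℝ) ≤ (((m:ℤ)+1 : ℤ) : ℝ) := by
        exact_mod_cast this
    _ = (m:ℝ)+1 := by push_cast; ring

lemma vc_one (m : ℕ) (n : ℤ) (h : |n| ≤ (m:ℤ)) : vc m n = 1 := by
  rw [vc_eq]
  have : max 0 ((2*(m:ℤ)+2)-|n|) - max 0 (((m:ℤ)+1)-|n|) = (m:ℤ)+1 := by omega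
  rw [this]
  push_cast
  field_simp

lemma gk_sample (m : ℕ) (n : ℤ) :
    ∫ ω in Set.Icc (-π) π, gk m ω * Efun ω n
      = ((2*π : ℝ) : ℂ) * (-1:ℂ)^n * (vc m n : ℂ) := by
  have expand : ∀ ω : ℝ, gk m ω * Efun ω n
      = 2 * (((Fej (2*m+1) (ω - π) : ℝ) : ℂ) * Efun ω n)
        - ((Fej m (ω - π) : ℝ) : ℂ) * Efun ω n := by
    intro ω; rw [gk]; ring
  simp_rw [expand]
  rw [MeasureTheory.integral_sub, MeasureTheory.integral_const_mul, Fint, Fint]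
  · rw [vc]
    push_cast
    ring
  · exact (continuous_const.mul ((Complex.continuous_ofReal.comp (continuous_FejShift _)).mul
      (continuous_Efun n))).integrableOn_Icc
  · exact ((Complex.continuous_ofReal.comp (continuous_FejShift _)).mul
      (continuous_Efun n)).integrableOn_Icc

lemma fc_zero (A : ℕ) : fc A 0 = 1 := by
  rw [fc]
  simp only [abs_zero, sub_zero]
  rw [max_eq_right (by positivity)]
  push_cast
  field_simp

lemma Fej_shift_integral (A : ℕ) :
    ∫ ω in Set.Icc (-π) π, Fej A (ω - π) = 2*π := by
  have h := Fint A 0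
  have e0 : ∀ ω : ℝ, Efun ω 0 = 1 := by intro ω; simp [Efun]
  simp_rw [e0, mul_one] at h
  rw [fc_zero] at h
  simp only [zpow_zero, mul_one, Complex.ofReal_one] at h
  have h2 : ∫ ω in Set.Icc (-π) π, ((Fej A (ω-π) : ℝ) : ℂ)
      = ((∫ ω in Set.Icc (-π) π, Fej A (ω-π) : ℝ) : ℂ) := integral_ofReal
  rw [h2] at h
  exact_mod_cast h

lemma gk_norm_le (m : ℕ) (ω : ℝ) :
    ‖gk m ω‖ ≤ 2 * Fej (2*m+1) (ω - π) + Fej m (ω - π) := by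
  have : gk m ω = ((2 * Fej (2*m+1) (ω - π) - Fej m (ω - π) : ℝ) : ℂ) := by
    rw [gk]; push_cast; ring
  rw [this, Complex.norm_real, Real.norm_eq_abs]
  have h1 := Fej_nonneg (2*m+1) (ω - π)
  have h2 := Fej_nonneg m (ω - π)
  rw [abs_le]
  constructor <;> linarith

lemma gk_lintegral (m : ℕ) :
    ∫⁻ ω in Set.Icc (-π) π, ‖gk m ω‖₊ ≤ ENNReal.ofReal (6*π) := by
  have hA : IntegrableOn (fun ω : ℝ => 2 * Fej (2*m+1) (ω - π)) (Set.Icc (-π) π) volume :=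
    (continuous_const.mul (continuous_FejShift _)).integrableOn_Icc
  have hB : IntegrableOn (fun ω : ℝ => Fej m (ω - π)) (Set.Icc (-π) π) volume :=
    (continuous_FejShift _).integrableOn_Icc
  have hint : IntegrableOn (fun ω => 2 * Fej (2*m+1) (ω - π) + Fej m (ω - π)) (Set.Icc (-π) π) :=
    hA.add hB
  calc ∫⁻ ω in Set.Icc (-π) π, (‖gk m ω‖₊ : ℝ≥0∞)
      ≤ ∫⁻ ω in Set.Icc (-π) π, ENNReal.ofReal (2 * Fej (2*m+1) (ω - π) + Fej m (ω - π)) := by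
        apply MeasureTheory.lintegral_mono
        intro ω
        dsimp only
        rw [← ofReal_norm_eq_coe_nnnorm]
        exact ENNReal.ofReal_le_ofReal (gk_norm_le m ω)
    _ = ENNReal.ofReal (∫ ω in Set.Icc (-π) π, (2 * Fej (2*m+1) (ω - π) + Fej m (ω - π))) := by
        rw [← MeasureTheory.ofReal_integral_eq_lintegral_ofReal hint]
        exact Filter.Eventually.of_forall fun ω => by
          have := Fej_nonneg (2*m+1) (ω - π); have := Fej_nonneg m (ω - π); positivity
    _ = ENNReal.ofReal (6*π) := by
        rw [MeasureTheory.integral_add hA hB,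
          MeasureTheory.integral_const_mul, Fej_shift_integral, Fej_shift_integral]
        congr 1
        ring

def ck (k : ℕ) : ℝ := (1/2 : ℝ)^k

lemma ck_pos (k : ℕ) : 0 < ck k := by rw [ck]; positivity

lemma ck_summable : Summable ck := summable_geometric_of_lt_one (by norm_num) (by norm_num)

def Hsum (j : ℕ) : ℝ := ∑ i ∈ Finset.range j, (1 / ((i:ℝ) + 1) : ℝ)

lemma Hsum_mono : Monotone Hsum := by
  intro a b hab
  exact Finset.sum_le_sum_of_subset_of_nonneg (Finset.range_subset_range.mpr hab)
    (fun i _ _ => by positivity)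

lemma Mspec (k : ℕ) : ∃ N : ℕ, k ≤ N ∧ π * ((k:ℝ) + 7) * 2^k ≤ Hsum (2*N+1) := by
  obtain ⟨N₀, hN₀⟩ := (Filter.tendsto_atTop.mp Real.tendsto_sum_range_one_div_nat_succ_atTop
    (π * ((k:ℝ) + 7) * 2^k)).exists_forall_of_atTop
  refine ⟨max k N₀, le_max_left _ _, ?_⟩
  have h1 : Hsum N₀ ≥ π * ((k:ℝ) + 7) * 2^k := by
    have := hN₀ N₀ le_rfl
    simpa [Hsum] using this
  have h2 : Hsum N₀ ≤ Hsum (2 * max k N₀ + 1) := Hsum_mono (by omega)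
  linarith

def Mf (k : ℕ) : ℕ := (Mspec k).choose

lemma Mf_ge (k : ℕ) : k ≤ Mf k := (Mspec k).choose_spec.1

lemma Mf_H (k : ℕ) : π * ((k:ℝ) + 7) * 2^k ≤ Hsum (2*(Mf k)+1) := (Mspec k).choose_spec.2

def gfun (ω : ℝ) : ℂ := ∑' k : ℕ, (ck k : ℂ) * gk (Mf k) ω

def f0 (z : ℂ) : ℂ := ((1 / (2 * π) : ℝ) : ℂ) *
  ∫ ω in Set.Icc (-π) π, gfun ω * Complex.exp (Complex.I * (ω : ℂ) * z)

lemma norm_Efun (x : ℝ) (n : ℤ) : ‖Efun x n‖ = 1 := by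
  rw [Efun, Complex.norm_exp]
  have : (Complex.I * n * x).re = 0 := by simp
  rw [this, Real.exp_zero]

lemma F_lint (k : ℕ) (h : ℝ → ℂ) (hnorm : ∀ ω, ‖h ω‖ = 1) :
    ∫⁻ ω in Set.Icc (-π) π, ‖(ck k:ℂ) * gk (Mf k) ω * h ω‖₊
      ≤ ENNReal.ofReal (ck k) * ENNReal.ofReal (6*π) := by
  have hpt : ∀ ω : ℝ, (‖(ck k:ℂ) * gk (Mf k) ω * h ω‖₊ : ℝ≥0∞)
      = ENNReal.ofReal (ck k) * (‖gk (Mf k) ω‖₊ : ℝ≥0∞) := by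
    intro ω
    rw [← ofReal_norm_eq_coe_nnnorm, ← ofReal_norm_eq_coe_nnnorm, ← ENNReal.ofReal_mul
      (le_of_lt (ck_pos k)), norm_mul, norm_mul, hnorm, Complex.norm_real,
      Real.norm_eq_abs, abs_of_pos (ck_pos k), mul_one]
  simp_rw [hpt]
  rw [MeasureTheory.lintegral_const_mul]
  · exact mul_le_mul_right (gk_lintegral (Mf k)) _
  · exact (continuous_gk (Mf k)).measurable.nnnorm.coe_nnreal_ennreal

lemma ck_tsum_ennreal : ∑' k : ℕ, ENNReal.ofReal (ck k) = 2 := by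
  have h1 : ∀ k : ℕ, ENNReal.ofReal (ck k) = (1/2 : ℝ≥0∞)^k := by
    intro k
    rw [ck, ENNReal.ofReal_pow (by norm_num)]
    congr 1
    rw [ENNReal.ofReal_div_of_pos (by norm_num)]
    norm_num
  simp_rw [h1]
  rw [ENNReal.tsum_geometric]
  norm_num [ENNReal.one_sub_inv_two]

lemma total_lint (h : ℝ → ℂ) (hnorm : ∀ ω, ‖h ω‖ = 1) :
    ∑' k : ℕ, ∫⁻ ω in Set.Icc (-π) π, ‖(ck k:ℂ) * gk (Mf k) ω * h ω‖₊
      ≤ ENNReal.ofReal (12*π) := by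
  calc ∑' k : ℕ, ∫⁻ ω in Set.Icc (-π) π, ‖(ck k:ℂ) * gk (Mf k) ω * h ω‖₊
      ≤ ∑' k : ℕ, ENNReal.ofReal (ck k) * ENNReal.ofReal (6*π) :=
        ENNReal.tsum_le_tsum fun k => F_lint k h hnorm
    _ = (∑' k : ℕ, ENNReal.ofReal (ck k)) * ENNReal.ofReal (6*π) := ENNReal.tsum_mul_right
    _ = 2 * ENNReal.ofReal (6*π) := by rw [ck_tsum_ennreal]
    _ = ENNReal.ofReal (12*π) := by
        rw [show (2:ℝ≥0∞) = ENNReal.ofReal 2 by norm_num, ← ENNReal.ofReal_mul (by norm_num)]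
        congr 1
        ring

abbrev μres : Measure ℝ := volume.restrict (Set.Icc (-π) π)

lemma FF_meas (k : ℕ) : Measurable fun ω : ℝ => (ck k:ℂ) * gk (Mf k) ω :=
  (continuous_const.mul (continuous_gk _)).measurable

lemma ae_fin : ∀ᵐ ω ∂μres, (∑' k : ℕ, (‖(ck k:ℂ) * gk (Mf k) ω‖₊ : ℝ≥0∞)) < ⊤ := by
  apply ae_lt_top' (AEMeasurable.ennreal_tsum fun k =>
    ((FF_meas k).nnnorm.coe_nnreal_ennreal).aemeasurable)
  rw [MeasureTheory.lintegral_tsum (fun k =>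
    ((FF_meas k).nnnorm.coe_nnreal_ennreal).aemeasurable)]
  have htot := total_lint (fun _ => 1) (fun _ => by simp)
  simp only [mul_one] at htot
  exact ne_top_of_le_ne_top ENNReal.ofReal_ne_top htot

lemma ae_summable : ∀ᵐ ω ∂μres, Summable (fun k : ℕ => (ck k:ℂ) * gk (Mf k) ω) := by
  filter_upwards [ae_fin] with ω hω
  have h1 : Summable fun k : ℕ => ‖(ck k:ℂ) * gk (Mf k) ω‖₊ :=
    ENNReal.tsum_coe_ne_top_iff_summable.mp hω.ne
  exact Summable.of_nnnorm h1

lemma gfun_aesm : AEStronglyMeasurable gfun μres := by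
  apply aestronglyMeasurable_of_tendsto_ae
    (f := fun N ω => ∑ k ∈ Finset.range N, (ck k:ℂ) * gk (Mf k) ω) atTop
  · intro N
    exact Finset.aestronglyMeasurable_fun_sum _ fun k _ => (FF_meas k).aestronglyMeasurable
  · filter_upwards [ae_summable] with ω hω
    exact hω.hasSum.tendsto_sum_nat

lemma gfun_nnnorm_ae : ∀ᵐ ω ∂μres,
    (‖gfun ω‖₊ : ℝ≥0∞) ≤ ∑' k : ℕ, (‖(ck k:ℂ) * gk (Mf k) ω‖₊ : ℝ≥0∞) := by
  filter_upwards [ae_fin] with ω hω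
  have h1 : Summable fun k : ℕ => ‖(ck k:ℂ) * gk (Mf k) ω‖₊ :=
    ENNReal.tsum_coe_ne_top_iff_summable.mp hω.ne
  rw [← ENNReal.coe_tsum h1]
  exact_mod_cast nnnorm_tsum_le h1

lemma gfun_lint : ∫⁻ ω in Set.Icc (-π) π, ‖gfun ω‖₊ ≤ ENNReal.ofReal (12*π) := by
  calc ∫⁻ ω in Set.Icc (-π) π, (‖gfun ω‖₊ : ℝ≥0∞)
      ≤ ∫⁻ ω in Set.Icc (-π) π, ∑' k : ℕ, (‖(ck k:ℂ) * gk (Mf k) ω‖₊ : ℝ≥0∞) :=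
        MeasureTheory.lintegral_mono_ae gfun_nnnorm_ae
    _ = ∑' k : ℕ, ∫⁻ ω in Set.Icc (-π) π, (‖(ck k:ℂ) * gk (Mf k) ω‖₊ : ℝ≥0∞) :=
        MeasureTheory.lintegral_tsum (fun k => ((FF_meas k).nnnorm.coe_nnreal_ennreal).aemeasurable)
    _ ≤ ENNReal.ofReal (12*π) := by
        have htot := total_lint (fun _ => 1) (fun _ => by simp)
        simp only [mul_one] at htot
        exact htot

lemma gfun_memℒp : MemLp gfun 1 μres := by
  refine ⟨gfun_aesm, ?_⟩
  rw [MeasureTheory.eLpNorm_one_eq_lintegral_enorm]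
  exact lt_of_le_of_lt gfun_lint ENNReal.ofReal_lt_top

def asum (n : ℤ) : ℝ := ∑' k : ℕ, ck k * vc (Mf k) n

lemma asum_summable (n : ℤ) : Summable (fun k : ℕ => ck k * vc (Mf k) n) := by
  refine Summable.of_nonneg_of_le (fun k => mul_nonneg (ck_pos k).le (vc_nonneg _ _)) (fun k => ?_) ck_summable
  calc ck k * vc (Mf k) n ≤ ck k * 1 := by
        exact mul_le_mul_of_nonneg_left (vc_le_one _ _) (ck_pos k).le
    _ = ck k := mul_one _

lemma asum_nonneg (n : ℤ) : 0 ≤ asum n :=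
  tsum_nonneg fun k => mul_nonneg (ck_pos k).le (vc_nonneg _ _)

lemma asum_ge (K : ℕ) (n : ℤ) (h : |n| ≤ (Mf K : ℤ)) : ck K ≤ asum n := by
  have h1 : ck K * vc (Mf K) n ≤ asum n :=
    Summable.le_tsum (asum_summable n) K fun j _ => mul_nonneg (ck_pos j).le (vc_nonneg _ _)
  rwa [vc_one _ _ h, mul_one] at h1

lemma f0_sample (n : ℤ) : f0 ((n : ℤ) : ℂ) = (-1:ℂ)^n * ((asum n : ℝ) : ℂ) := by
  have hexp : ∀ ω : ℝ, Complex.exp (Complex.I * (ω:ℂ) * ((n:ℤ):ℂ)) = Efun ω n := by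
    intro ω; rw [Efun]; congr 1; push_cast; ring
  have h1 : ∀ ω : ℝ, gfun ω * Complex.exp (Complex.I * (ω:ℂ) * ((n:ℤ):ℂ))
      = ∑' k : ℕ, ((ck k:ℂ) * gk (Mf k) ω * Efun ω n) := by
    intro ω
    rw [hexp ω, gfun, ← tsum_mul_right]
  rw [f0]
  simp only [h1]
  rw [MeasureTheory.integral_tsum (fun k => (show Measurable (fun ω => (ck k:ℂ) * gk (Mf k) ω * Efun ω n) from ((FF_meas k).mul (continuous_Efun n).measurable)).aestronglyMeasurable)
    (ne_top_of_le_ne_top ENNReal.ofReal_ne_top (total_lint (fun ω => Efun ω n) (fun ω => norm_Efun ω n)))]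
  have h2 : ∀ k : ℕ, ∫ ω in Set.Icc (-π) π, ((ck k:ℂ) * gk (Mf k) ω * Efun ω n)
      = ((2*π:ℝ):ℂ) * (-1:ℂ)^n * ((ck k * vc (Mf k) n : ℝ) : ℂ) := by
    intro k
    simp_rw [mul_assoc]
    rw [MeasureTheory.integral_const_mul]
    simp_rw [← mul_assoc]
    rw [gk_sample]
    push_cast
    ring
  simp only [h2]
  rw [tsum_mul_left]
  have h3 : ∑' (x:ℕ), ((ck x * vc (Mf x) n : ℝ):ℂ) = ((asum n:ℝ):ℂ) := by
    rw [asum, Complex.ofReal_tsum]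
  rw [h3]
  have hπ : ((2*π:ℝ):ℂ) ≠ 0 := by
    simp only [ne_eq, Complex.ofReal_eq_zero]
    positivity
  have : ((1 / (2 * π) : ℝ) : ℂ) = ((2*π:ℝ):ℂ)⁻¹ := by push_cast; ring
  rw [this]
  show ((2*π:ℝ):ℂ)⁻¹ * (((2*π:ℝ):ℂ) * (-1:ℂ)^n * ((asum n : ℝ):ℂ)) = _
  have hπ2 : ((π:ℝ):ℂ) ≠ 0 := by
    simp [Real.pi_ne_zero]
  field_simp

lemma f0_bound (t : ℝ) : ‖f0 (t:ℂ)‖ ≤ 6 := by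
  rw [f0, norm_mul]
  have h1 : ‖((1 / (2 * π) : ℝ) : ℂ)‖ = 1/(2*π) := by
    rw [Complex.norm_real, Real.norm_eq_abs, abs_of_pos (by positivity)]
  have h2 : ‖∫ ω in Set.Icc (-π) π, gfun ω * Complex.exp (Complex.I * (ω:ℂ) * (t:ℂ))‖ ≤ 12*π := by
    calc ‖∫ ω in Set.Icc (-π) π, gfun ω * Complex.exp (Complex.I * (ω:ℂ) * (t:ℂ))‖
        ≤ (∫⁻ ω in Set.Icc (-π) π, ENNReal.ofReal ‖gfun ω * Complex.exp (Complex.I * (ω:ℂ) * (t:ℂ))‖).toReal :=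
          MeasureTheory.norm_integral_le_lintegral_norm _
      _ = (∫⁻ ω in Set.Icc (-π) π, (‖gfun ω‖₊ : ℝ≥0∞)).toReal := by
          congr 1
          apply MeasureTheory.lintegral_congr
          intro ω
          have he : ‖Complex.exp (Complex.I * (ω:ℂ) * (t:ℂ))‖ = 1 := by
            rw [Complex.norm_exp]
            have : (Complex.I * (ω:ℂ) * (t:ℂ)).re = 0 := by simp
            rw [this, Real.exp_zero]
          rw [norm_mul, he, mul_one, ofReal_norm_eq_coe_nnnorm]
      _ ≤ (ENNReal.ofReal (12*π)).toReal :=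
          ENNReal.toReal_mono ENNReal.ofReal_ne_top gfun_lint
      _ = 12*π := ENNReal.toReal_ofReal (by positivity)
  calc ‖((1 / (2 * π) : ℝ) : ℂ)‖ * ‖∫ ω in Set.Icc (-π) π, gfun ω * Complex.exp (Complex.I * (ω:ℂ) * (t:ℂ))‖
      ≤ (1/(2*π)) * (12*π) := by
        rw [h1]
        exact mul_le_mul_of_nonneg_left h2 (by positivity)
    _ = 6 := by
        have := Real.pi_ne_zero
        field_simp
        ring

lemma sinc_half (N : ℕ) (n : ℤ) (hn : n ∈ Finset.Icc (-(N:ℤ)) (N:ℤ)) :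
    sincπ (((N:ℝ) + 1/2) - (n:ℝ)) = (-1:ℝ)^((N:ℤ) - n) / (π * (((N:ℝ)+1/2) - n)) := by
  simp only [Finset.mem_Icc] at hn
  have hcast : (n:ℝ) ≤ (N:ℝ) := by exact_mod_cast hn.2
  have hpos : 0 < ((N:ℝ)+1/2) - n := by linarith
  rw [sincπ, if_neg (ne_of_gt hpos)]
  have harg : π * (((N:ℝ)+1/2) - n) = π/2 + (((N:ℤ) - n : ℤ) : ℝ) * π := by push_cast; ring
  rw [harg, Real.sin_add_int_mul_pi, Real.sin_pi_div_two, mul_one, ← harg]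

lemma harm_lower (N : ℕ) :
    Hsum (2*N+1) ≤ ∑ n ∈ Finset.Icc (-(N:ℤ)) (N:ℤ), 1/(((N:ℝ)+1/2) - n) := by
  have hre : ∑ n ∈ Finset.Icc (-(N:ℤ)) (N:ℤ), 1/(((N:ℝ)+1/2) - n)
      = ∑ j ∈ Finset.range (2*N+1), 1/((j:ℝ)+1/2) := by
    refine Finset.sum_nbij' (fun n => ((N:ℤ) - n).toNat) (fun j => (N:ℤ) - (j:ℤ)) ?_ ?_ ?_ ?_ ?_
    · intro n hn; simp only [Finset.mem_Icc] at hn; simp only [Finset.mem_range]; omega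
    · intro j hj; simp only [Finset.mem_range] at hj; simp only [Finset.mem_Icc]; omega
    · intro n hn; simp only [Finset.mem_Icc] at hn; omega
    · intro j hj; simp only [Finset.mem_range] at hj; omega
    · intro n hn
      simp only [Finset.mem_Icc] at hn
      congr 1
      have : ((((N:ℤ) - n).toNat : ℤ) : ℝ) = ((N:ℝ) - n) := by
        have h2 : (((N:ℤ) - n).toNat : ℤ) = (N:ℤ) - n := Int.toNat_of_nonneg (by omega)
        rw [h2]; push_cast; ring
      rw [show ((((N:ℤ) - n).toNat : ℕ) : ℝ) = ((((N:ℤ) - n).toNat : ℤ) : ℝ) by push_cast; ring, this]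
      ring
  rw [hre, Hsum]
  apply Finset.sum_le_sum
  intro j hj
  have : (0:ℝ) < (j:ℝ) + 1/2 := by positivity
  apply div_le_div_of_nonneg_left (by norm_num) this (by linarith)

lemma shannon_lower (K : ℕ) :
    ((K:ℝ) + 7) ≤ ‖shannonSum f0 (Mf K) (((Mf K : ℝ)) + 1/2)‖ := by
  set N := Mf K with hN
  set t₀ : ℝ := (N:ℝ) + 1/2 with ht₀
  have hterm : ∀ n ∈ Finset.Icc (-(N:ℤ)) (N:ℤ),
      f0 ((n:ℤ):ℂ) * ((sincπ (t₀ - (n:ℝ)) : ℝ) : ℂ)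
        = (-1:ℂ)^((N:ℤ)) * ((asum n / (π * (t₀ - (n:ℝ))) : ℝ) : ℂ) := by
    intro n hn
    rw [f0_sample, sinc_half N n hn]
    have hcz : (((-1:ℝ)^((N:ℤ) - n) : ℝ) : ℂ) = (-1:ℂ)^((N:ℤ)-n) := by
      rw [Complex.ofReal_zpow]
      norm_num
    rw [Complex.ofReal_div, hcz]
    rw [show (-1:ℂ)^n * ((asum n : ℝ):ℂ) * ((-1:ℂ)^((N:ℤ)-n) / ((π * (t₀ - (n:ℝ)) : ℝ) : ℂ))
      = ((-1:ℂ)^n * (-1:ℂ)^((N:ℤ)-n)) * (((asum n : ℝ):ℂ) / ((π * (t₀ - (n:ℝ)) : ℝ) : ℂ)) from by ring]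
    rw [← zpow_add₀ (by norm_num : (-1:ℂ) ≠ 0)]
    rw [show n + ((N:ℤ) - n) = (N:ℤ) by ring]
    rw [Complex.ofReal_div]
  rw [shannonSum, Finset.sum_congr rfl hterm, ← Finset.mul_sum]
  have hsum : ∑ n ∈ Finset.Icc (-(N:ℤ)) (N:ℤ), ((asum n / (π * (t₀ - (n:ℝ))) : ℝ) : ℂ)
      = ((∑ n ∈ Finset.Icc (-(N:ℤ)) (N:ℤ), asum n / (π * (t₀ - (n:ℝ))) : ℝ) : ℂ) := by
    rw [Complex.ofReal_sum]
  rw [hsum, norm_mul]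
  have h1 : ‖(-1:ℂ)^((N:ℤ))‖ = 1 := by
    rw [norm_zpow]
    norm_num
  rw [h1, one_mul, Complex.norm_real, Real.norm_eq_abs]
  set r : ℝ := ∑ n ∈ Finset.Icc (-(N:ℤ)) (N:ℤ), asum n / (π * (t₀ - (n:ℝ))) with hr
  have hterm_pos : ∀ n ∈ Finset.Icc (-(N:ℤ)) (N:ℤ), 0 < π * (t₀ - (n:ℝ)) := by
    intro n hn
    simp only [Finset.mem_Icc] at hn
    have : (n:ℝ) ≤ (N:ℝ) := by exact_mod_cast hn.2
    have : 0 < t₀ - (n:ℝ) := by rw [ht₀]; linarith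
    have := Real.pi_pos
    positivity
  have hrge : ((K:ℝ) + 7) ≤ r := by
    have step1 : ∀ n ∈ Finset.Icc (-(N:ℤ)) (N:ℤ),
        ck K * (1/π) * (1/(t₀ - (n:ℝ))) ≤ asum n / (π * (t₀ - (n:ℝ))) := by
      intro n hn
      simp only [Finset.mem_Icc] at hn
      have hge : ck K ≤ asum n := by
        apply asum_ge
        rw [← hN]
        rcases abs_cases n with ⟨h,_⟩|⟨h,_⟩ <;> omega
      have hpos := hterm_pos n (by simp only [Finset.mem_Icc]; exact hn)
      have h2 : 0 < t₀ - (n:ℝ) := by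
        have := Real.pi_pos
        nlinarith
      rw [show ck K * (1/π) * (1/(t₀ - (n:ℝ))) = ck K / (π * (t₀ - (n:ℝ))) from by field_simp]
      exact (div_le_div_iff_of_pos_right hpos).mpr hge
    have hck2 : ck K * (2:ℝ)^K = 1 := by rw [ck, ← mul_pow]; norm_num
    have hπ := Real.pi_pos
    calc ((K:ℝ)+7) = ck K * (1/π) * (π * ((K:ℝ)+7) * 2^K) := by
          rw [show ck K * (1/π) * (π * ((K:ℝ)+7) * 2^K)
            = (ck K * 2^K) * (((K:ℝ)+7) * (π * (1/π))) from by ring, hck2,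
            mul_one_div_cancel hπ.ne']
          ring
      _ ≤ ck K * (1/π) * Hsum (2*N+1) := by
          apply mul_le_mul_of_nonneg_left _ (mul_nonneg (ck_pos K).le (by positivity))
          calc π * ((K:ℝ)+7) * 2^K ≤ Hsum (2*(Mf K)+1) := Mf_H K
            _ = Hsum (2*N+1) := by rw [hN]
      _ ≤ ck K * (1/π) * ∑ n ∈ Finset.Icc (-(N:ℤ)) (N:ℤ), 1/(t₀ - (n:ℝ)) := by
          apply mul_le_mul_of_nonneg_left _ (mul_nonneg (ck_pos K).le (by positivity))
          exact harm_lower N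
      _ = ∑ n ∈ Finset.Icc (-(N:ℤ)) (N:ℤ), ck K * (1/π) * (1/(t₀ - (n:ℝ))) := by
          rw [Finset.mul_sum]
      _ ≤ r := Finset.sum_le_sum step1
  exact le_trans hrge (le_abs_self r)

lemma limsup_top_of (u : ℕ → ℝ≥0∞) (h : ∀ K : ℕ, (K:ℝ≥0∞) ≤ u (Mf K)) :
    Filter.limsup u Filter.atTop = ⊤ := by
  apply le_antisymm le_top
  rw [Filter.limsup_eq_iInf_iSup_of_nat]
  refine le_iInf fun n => ?_
  rw [← ENNReal.iSup_natCast]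
  refine iSup_le fun j => ?_
  calc (j:ℝ≥0∞) ≤ ((max n j : ℕ):ℝ≥0∞) := Nat.cast_le.mpr (le_max_right n j)
    _ ≤ u (Mf (max n j)) := h _
    _ ≤ ⨆ i, ⨆ (_ : i ≥ n), u i :=
        le_iSup₂ (f := fun i (_ : i ≥ n) => u i) (Mf (max n j))
          (le_trans (le_max_left n j) (Mf_ge _))


/-- There is `f₀ ∈ PW^1_π` for which the Shannon sampling series
is not uniformly bounded on `ℝ`: `limsup_N sup_t |(S_N f₀)(t)| = ∞`, and in
particular `limsup_N sup_t |f₀(t) − (S_N f₀)(t)| = ∞`. -/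
theorem shannon_weak_divergence_PW1 :
    ∃ f₀ : ℂ → ℂ, IsPW 1 π f₀ ∧
      limsup (fun N : ℕ => ⨆ t : ℝ, (‖shannonSum f₀ N t‖₊ : ℝ≥0∞)) atTop = ⊤ ∧
      limsup (fun N : ℕ => ⨆ t : ℝ, (‖f₀ (t : ℂ) - shannonSum f₀ N t‖₊ : ℝ≥0∞)) atTop = ⊤ := by
  refine ⟨f0, ⟨gfun, gfun_memℒp, fun z => rfl⟩, ?_, ?_⟩
  · apply limsup_top_of
    intro K
    set t₀ : ℝ := ((Mf K : ℝ)) + 1/2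
    have hreal : (K:ℝ) ≤ ‖shannonSum f0 (Mf K) t₀‖ := by
      have := shannon_lower K
      have hK : (K:ℝ) ≤ (K:ℝ) + 7 := by linarith
      linarith
    calc (K:ℝ≥0∞) = ENNReal.ofReal (K:ℝ) := (ENNReal.ofReal_natCast K).symm
      _ ≤ ENNReal.ofReal ‖shannonSum f0 (Mf K) t₀‖ := ENNReal.ofReal_le_ofReal hreal
      _ = (‖shannonSum f0 (Mf K) t₀‖₊ : ℝ≥0∞) := ofReal_norm_eq_coe_nnnorm _
      _ ≤ ⨆ t : ℝ, (‖shannonSum f0 (Mf K) t‖₊ : ℝ≥0∞) :=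
          le_iSup (fun t : ℝ => (‖shannonSum f0 (Mf K) t‖₊ : ℝ≥0∞)) t₀
  · apply limsup_top_of
    intro K
    set t₀ : ℝ := ((Mf K : ℝ)) + 1/2
    have hreal : (K:ℝ) ≤ ‖f0 (t₀:ℂ) - shannonSum f0 (Mf K) t₀‖ := by
      have h1 := shannon_lower K
      have h2 := f0_bound t₀
      have h3 : ‖shannonSum f0 (Mf K) t₀‖ - ‖f0 (t₀:ℂ)‖
          ≤ ‖shannonSum f0 (Mf K) t₀ - f0 (t₀:ℂ)‖ := norm_sub_norm_le _ _
      rw [norm_sub_rev] at h3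
      linarith
    calc (K:ℝ≥0∞) = ENNReal.ofReal (K:ℝ) := (ENNReal.ofReal_natCast K).symm
      _ ≤ ENNReal.ofReal ‖f0 (t₀:ℂ) - shannonSum f0 (Mf K) t₀‖ := ENNReal.ofReal_le_ofReal hreal
      _ = (‖f0 (t₀:ℂ) - shannonSum f0 (Mf K) t₀‖₊ : ℝ≥0∞) := ofReal_norm_eq_coe_nnnorm _
      _ ≤ ⨆ t : ℝ, (‖f0 (t:ℂ) - shannonSum f0 (Mf K) t‖₊ : ℝ≥0∞) :=
          le_iSup (fun t : ℝ => (‖f0 (t:ℂ) - shannonSum f0 (Mf K) t‖₊ : ℝ≥0∞)) t₀
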